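/- Let G be the group with presentation ⟨a, b, t | t a t⁻¹ = a b, t b t⁻¹ = b a b⟩ and let ι : F₂ → G be the homomorphism sending the free generators u, v to a, b respectively. For every natural number n there exists w_n ∈ F₂ with ι(w_n) = tⁿ a t⁻ⁿ; moreover every w ∈ F₂ with ι(w) = tⁿ a t⁻ⁿ has reduced word length |w| ≥ 2ⁿ in the basis {u, v}, while the word length of tⁿ a t⁻ⁿ in G with respect to the generating set {a, b, t} is at most 2n + 1. -/

import Mathlib

/-- The relations `t a t⁻¹ = a b` and `t b t⁻¹ = b a b` of the figure-eight knot group,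
with generators `a, b, t` encoded as `0, 1, 2 : Fin 3`. -/
def fig8Rels : Set (FreeGroup (Fin 3)) :=
  {FreeGroup.of 2 * FreeGroup.of 0 * (FreeGroup.of 2)⁻¹ *
      (FreeGroup.of 0 * FreeGroup.of 1)⁻¹,
   FreeGroup.of 2 * FreeGroup.of 1 * (FreeGroup.of 2)⁻¹ *
      (FreeGroup.of 1 * FreeGroup.of 0 * FreeGroup.of 1)⁻¹}

/-- The fundamental group of the figure-eight knot complement,
`⟨a, b, t | t a t⁻¹ = a b, t b t⁻¹ = b a b⟩`. -/
abbrev Fig8 : Type := PresentedGroup fig8Rels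

/-- The generator `a` of the figure-eight knot group. -/
def fig8a : Fig8 := PresentedGroup.of 0

/-- The generator `b` of the figure-eight knot group. -/
def fig8b : Fig8 := PresentedGroup.of 1

/-- The generator `t` of the figure-eight knot group. -/
def fig8t : Fig8 := PresentedGroup.of 2

/-- The homomorphism `F₂ → G` sending the free generators `u, v` to `a, b`. -/
def fig8iota : FreeGroup (Fin 2) →* Fig8 := FreeGroup.lift ![fig8a, fig8b]


/-- The word length of `g` with respect to a generating set `S`: the minimal length of a
word in the elements of `S` and their inverses representing `g`. -/
noncomputable def wordLength {G : Type*} [Group G] (S : Set G) (g : G) : ℕ :=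
  sInf {n | ∃ l : List G, l.length = n ∧ (∀ x ∈ l, x ∈ S ∨ x⁻¹ ∈ S) ∧ l.prod = g}

namespace Fig8Aux

abbrev F2 := FreeGroup (Fin 2)
def u : F2 := FreeGroup.of 0
def v : F2 := FreeGroup.of 1

def phi : F2 →* F2 := FreeGroup.lift ![u * v, v * u * v]
def psi : F2 →* F2 := FreeGroup.lift ![u * u * v⁻¹, v * u⁻¹]

@[simp] lemma phi_u : phi u = u * v := by simp [phi, u, v]
@[simp] lemma phi_v : phi v = v * u * v := by simp [phi, u, v]
@[simp] lemma psi_u : psi u = u * u * v⁻¹ := by simp [psi, u, v]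
@[simp] lemma psi_v : psi v = v * u⁻¹ := by simp [psi, u, v]

lemma psi_phi : psi.comp phi = MonoidHom.id F2 := by
  apply FreeGroup.ext_hom
  intro a
  fin_cases a <;>
    simp only [MonoidHom.comp_apply, MonoidHom.id_apply] <;>
    · show psi (phi _) = _
      first
      | (show psi (phi u) = u; rw [phi_u]; simp [map_mul] <;> group)
      | (show psi (phi v) = v; rw [phi_v]; simp [map_mul]; group)

lemma phi_psi : phi.comp psi = MonoidHom.id F2 := by
  apply FreeGroup.ext_hom
  intro a
  fin_cases a <;>
    simp only [MonoidHom.comp_apply, MonoidHom.id_apply] <;>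
    · first
      | (show phi (psi u) = u; rw [psi_u]; simp [map_mul]; group)
      | (show phi (psi v) = v; rw [psi_v]; simp [map_mul] <;> group)

def Phi : MulAut F2 := MonoidHom.toMulEquiv phi psi psi_phi phi_psi

@[simp] lemma Phi_apply (w : F2) : Phi w = phi w := rfl

end Fig8Aux

namespace Fig8Aux
open SemidirectProduct

def act : Multiplicative ℤ →* MulAut F2 := zpowersHom _ Phi
abbrev H := SemidirectProduct F2 (Multiplicative ℤ) act

def T : Multiplicative ℤ := Multiplicative.ofAdd 1

lemma conj_inl (x : F2) : (inr T : H) * inl x * (inr T)⁻¹ = inl (phi x) := by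
  rw [← map_inv, ← SemidirectProduct.inl_aut]
  simp [act, T]

def fvec : Fin 3 → H := ![inl u, inl v, inr T]

lemma rels_hold : ∀ r ∈ fig8Rels, FreeGroup.lift fvec r = 1 := by
  intro r hr
  rcases hr with h | h <;> subst h <;>
    simp only [map_mul, map_inv, FreeGroup.lift_apply_of, fvec,
      Matrix.cons_val_zero, Matrix.cons_val_one, Matrix.head_cons,
      Matrix.cons_val_two, Matrix.tail_cons] <;>
    rw [conj_inl] <;> simp [← map_mul, ← map_inv, mul_assoc]

def pi : Fig8 →* H := PresentedGroup.toGroup rels_hold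

@[simp] lemma pi_a : pi fig8a = inl u := PresentedGroup.toGroup.of rels_hold
@[simp] lemma pi_b : pi fig8b = inl v := PresentedGroup.toGroup.of rels_hold
@[simp] lemma pi_t : pi fig8t = inr T := PresentedGroup.toGroup.of rels_hold

lemma pi_iota (w : F2) : pi (fig8iota w) = inl w := by
  have : pi.comp fig8iota = inl := by
    apply FreeGroup.ext_hom
    intro a
    fin_cases a <;> simp [fig8iota, fig8a, fig8b] <;> rfl
  exact DFunLike.congr_fun this w

end Fig8Aux

namespace Fig8Aux

lemma mk_rel {r : FreeGroup (Fin 3)} (h : r ∈ fig8Rels) :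
    PresentedGroup.mk fig8Rels r = 1 :=
  (QuotientGroup.eq_one_iff r).mpr (Subgroup.subset_normalClosure h)

lemma rel1 : fig8t * fig8a * fig8t⁻¹ = fig8a * fig8b := by
  have h := mk_rel (Set.mem_insert _ _)
  simp only [map_mul, map_inv] at h
  have : (PresentedGroup.mk fig8Rels (FreeGroup.of 2)) = fig8t := rfl
  rw [mul_inv_eq_one] at h
  exact h

lemma rel2 : fig8t * fig8b * fig8t⁻¹ = fig8b * fig8a * fig8b := by
  have h := mk_rel (Set.mem_insert_of_mem _ rfl)
  simp only [map_mul, map_inv] at h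
  rw [mul_inv_eq_one] at h
  exact h

lemma iota_phi (w : F2) : fig8iota (phi w) = fig8t * fig8iota w * fig8t⁻¹ := by
  have : fig8iota.comp phi =
      ((MulAut.conj fig8t).toMonoidHom).comp fig8iota := by
    apply FreeGroup.ext_hom
    intro a
    fin_cases a
    · show fig8iota (phi u) = (MulAut.conj fig8t).toMonoidHom (fig8iota u)
      rw [phi_u]
      simp [fig8iota, u, v, map_mul, MulAut.conj_apply]
      exact rel1.symm
    · show fig8iota (phi v) = (MulAut.conj fig8t).toMonoidHom (fig8iota v)
      rw [phi_v]
      simp [fig8iota, u, v, map_mul, MulAut.conj_apply]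
      exact rel2.symm
  have := DFunLike.congr_fun this w
  simpa [MulAut.conj_apply] using this

lemma Phi_pow_succ (n : ℕ) (w : F2) : (Phi ^ (n + 1)) w = (Phi ^ n) (phi w) := by
  rw [pow_succ]
  rfl

lemma iota_Phi_pow (n : ℕ) (w : F2) :
    fig8iota ((Phi ^ n) w) = fig8t ^ n * fig8iota w * (fig8t ^ n)⁻¹ := by
  induction n generalizing w with
  | zero => simp
  | succ n ih =>
    rw [Phi_pow_succ, ih, iota_phi]
    group

end Fig8Aux

namespace Fig8Aux
open SemidirectProduct

lemma act_Tpow (n : ℕ) : act (T ^ n) = Phi ^ n := by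
  rw [map_pow]
  norm_num [act, T, zpowersHom_apply]

lemma conj_inl_pow (n : ℕ) (x : F2) :
    (inr (T ^ n) : H) * inl x * (inr (T ^ n))⁻¹ = inl ((Phi ^ n) x) := by
  rw [← map_inv, ← SemidirectProduct.inl_aut, act_Tpow]

lemma pi_conj (n : ℕ) :
    pi (fig8t ^ n * fig8a * (fig8t ^ n)⁻¹) = inl ((Phi ^ n) u) := by
  rw [map_mul, map_mul, map_inv, map_pow, pi_t, pi_a, ← map_pow, conj_inl_pow]

/-- exponent-sum homomorphism -/
def e : F2 →* Multiplicative ℤ := FreeGroup.lift (fun _ => Multiplicative.ofAdd 1)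

@[simp] lemma e_u : (e u).toAdd = 1 := by simp [e, u]
@[simp] lemma e_v : (e v).toAdd = 1 := by simp [e, v]

lemma e_bounds (n : ℕ) :
    (2 ^ n : ℤ) ≤ (e ((Phi ^ n) u)).toAdd ∧
      (e ((Phi ^ n) u)).toAdd ≤ (e ((Phi ^ n) v)).toAdd ∧
      (1 : ℤ) ≤ (e ((Phi ^ n) u)).toAdd := by
  induction n with
  | zero => simp
  | succ n ih =>
    obtain ⟨h1, h2, h3⟩ := ih
    rw [Phi_pow_succ, Phi_pow_succ, phi_u, phi_v]
    simp only [map_mul, toAdd_mul]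
    refine ⟨?_, ?_, ?_⟩ <;> [skip; skip; skip] <;>
      · push_cast [pow_succ] at *
        linarith

lemma natAbs_le_length (w : F2) : (e w).toAdd.natAbs ≤ w.toWord.length := by
  have key : ∀ L : List (Fin 2 × Bool),
      (Multiplicative.toAdd (List.prod (L.map fun x => cond x.2 (Multiplicative.ofAdd (1:ℤ))
        ((Multiplicative.ofAdd (1:ℤ))⁻¹)))).natAbs ≤ L.length := by
    intro L
    induction L with
    | nil => simp
    | cons a L ih =>
      simp only [List.map_cons, List.prod_cons, toAdd_mul, List.length_cons]
      refine le_trans (Int.natAbs_add_le _ _) ?_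
      have : (Multiplicative.toAdd (cond a.2 (Multiplicative.ofAdd (1:ℤ))
          (Multiplicative.ofAdd (1:ℤ))⁻¹)).natAbs ≤ 1 := by
        rcases a with ⟨i, b⟩
        cases b <;> simp
      omega
  conv_lhs => rw [← FreeGroup.mk_toWord (x := w)]
  rw [e, FreeGroup.lift_mk]
  exact key w.toWord

end Fig8Aux


open Fig8Aux SemidirectProduct in
/-- `tⁿ a t⁻ⁿ` lies in the subgroup `⟨a, b⟩`, every word in `u, v` mapping to it has
reduced length at least `2ⁿ`, while its word length in `G` over `{a, b, t}` is at
most `2n + 1`. -/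
theorem fig8_distortion (n : ℕ) :
    (∃ w : FreeGroup (Fin 2), fig8iota w = fig8t ^ n * fig8a * (fig8t ^ n)⁻¹) ∧
    (∀ w : FreeGroup (Fin 2), fig8iota w = fig8t ^ n * fig8a * (fig8t ^ n)⁻¹ →
      2 ^ n ≤ w.toWord.length) ∧
    wordLength ({fig8a, fig8b, fig8t} : Set Fig8)
      (fig8t ^ n * fig8a * (fig8t ^ n)⁻¹) ≤ 2 * n + 1 := by
  have hkey : fig8iota ((Phi ^ n) u) = fig8t ^ n * fig8a * (fig8t ^ n)⁻¹ := by
    rw [iota_Phi_pow, show fig8iota u = fig8a by simp [fig8iota, u]]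
  refine ⟨⟨(Phi ^ n) u, hkey⟩, ?_, ?_⟩
  · intro w hw
    have hw' : w = (Phi ^ n) u := by
      have h1 : (inl w : H) = inl ((Phi ^ n) u) := by
        rw [← pi_iota, ← pi_iota, hw, hkey]
      exact inl_injective h1
    subst hw'
    have h2 := (e_bounds n).1
    have h3 := natAbs_le_length ((Phi ^ n) u)
    have h4 : 2 ^ n ≤ (Multiplicative.toAdd (e ((Phi ^ n) u))).natAbs := by
      have := le_trans h2 (Int.le_natAbs)
      exact_mod_cast this
    omega
  · apply Nat.sInf_le
    refine ⟨List.replicate n fig8t ++ [fig8a] ++ List.replicate n fig8t⁻¹, ?_, ?_, ?_⟩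
    · simp; omega
    · intro x hx
      simp only [List.mem_append, List.mem_replicate, List.mem_singleton] at hx
      rcases hx with (⟨-, h⟩ | h) | ⟨-, h⟩ <;> subst h
      · exact Or.inl (by simp)
      · exact Or.inl (by simp)
      · exact Or.inr (by simp)
    · simp only [List.prod_append, List.prod_replicate, List.prod_cons, List.prod_nil,
        mul_one, inv_pow]
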